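/- arXiv:0912.3770 — 2 statements merged into one kernel-verified Lean document; each statement's English description precedes it below -/
import Mathlib

section
/- Let W = X₁ + … + X_k be a sum of independent Bernoulli random variables with parameters p₁, …, p_k, and let λ = p₁ + … + p_k > 0. Then the total variation distance between the law of W and the Poisson distribution with mean λ is at most ((1 − e^{−λ})/λ) · Σᵢ pᵢ². -/
open Real Set Filter MeasureTheory ProbabilityTheory


namespace ChenSteinAux

variable (L : ℝ) (A : Set ℕ)

noncomputable def q (j : ℕ) : ℝ := L ^ j / (Nat.factorial j : ℝ)
noncomputable def pois (j : ℕ) : ℝ := Real.exp (-L) * (L ^ j / (Nat.factorial j : ℝ))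
noncomputable def tt (n : ℕ) : ℝ := ∑ i ∈ Finset.range n, q L i
noncomputable def uu (n : ℕ) : ℝ := ∑' i : ℕ, q L (i + n)
noncomputable def PA : ℝ := ∑' j : ℕ, Set.indicator A (pois L) j

lemma hasSum_q : HasSum (q L) (Real.exp L) := by
  unfold q; rw [exp_eq_exp_ℝ]; exact NormedSpace.expSeries_div_hasSum_exp L

lemma summable_q : Summable (q L) := (hasSum_q L).summable

lemma pois_eq (j : ℕ) : pois L j = Real.exp (-L) * q L j := rfl

lemma hasSum_pois : HasSum (pois L) 1 := by
  have h := (hasSum_q L).mul_left (Real.exp (-L))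
  rw [← Real.exp_add, neg_add_cancel, Real.exp_zero] at h
  exact h

lemma summable_pois : Summable (pois L) := (hasSum_pois L).summable

lemma q_nonneg (hL : 0 ≤ L) (j : ℕ) : 0 ≤ q L j := by
  unfold q; positivity

lemma pois_nonneg (hL : 0 ≤ L) (j : ℕ) : 0 ≤ pois L j := by
  unfold pois; positivity

lemma tt_nonneg (hL : 0 ≤ L) (n : ℕ) : 0 ≤ tt L n :=
  Finset.sum_nonneg fun i _ => q_nonneg L hL i

lemma summable_q_tail (n : ℕ) : Summable (fun i => q L (i + n)) :=
  (summable_nat_add_iff n).2 (summable_q L)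

lemma uu_nonneg (hL : 0 ≤ L) (n : ℕ) : 0 ≤ uu L n :=
  tsum_nonneg fun i => q_nonneg L hL _

lemma tt_add_uu (n : ℕ) : tt L n + uu L n = Real.exp L := by
  rw [tt, uu, Summable.sum_add_tsum_nat_add n (summable_q L), (hasSum_q L).tsum_eq]

lemma factorial_pos' (i : ℕ) : (0:ℝ) < (Nat.factorial i : ℝ) := by
  exact_mod_cast Nat.factorial_pos i

lemma L_mul_q (i : ℕ) : L * q L i = (i+1) * q L (i+1) := by
  unfold q
  have h0 : (Nat.factorial i : ℝ) ≠ 0 := (factorial_pos' i).ne'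
  have h1 : (Nat.factorial (i+1) : ℝ) ≠ 0 := (factorial_pos' (i+1)).ne'
  have h2 : (Nat.factorial (i+1) : ℝ) = (i+1) * (Nat.factorial i : ℝ) := by
    rw [Nat.factorial_succ]; push_cast; ring
  rw [pow_succ]
  field_simp [h2]
  rw [h2]; ring


/-- indicator of A as real-valued function -/
noncomputable def ind (j : ℕ) : ℝ := Set.indicator A (fun _ => (1:ℝ)) j

lemma ind_def (j : ℕ) : ind A j = Set.indicator A (fun _ => (1:ℝ)) j := rfl

noncomputable def g : ℕ → ℝ
  | 0 => 0
  | (n+1) => ((n : ℝ) * g n + ind A n - PA L A) / L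

/-- Stein equation -/
lemma stein_eq (hL : L ≠ 0) (n : ℕ) :
    L * g L A (n+1) - (n : ℝ) * g L A n = ind A n - PA L A := by
  rw [g]
  field_simp
  ring

/-- partial sum appearing in the closed form -/
noncomputable def S (n : ℕ) : ℝ := ∑ j ∈ Finset.range n, q L j * (ind A j - PA L A)

noncomputable def b (m : ℕ) : ℝ := (Nat.factorial m : ℝ) / L ^ (m+1)

lemma g_closed (hL : L ≠ 0) (n : ℕ) : g L A (n+1) = b L n * S L A (n+1) := by
  induction n with
  | zero =>
      rw [g, b, S]
      simp [Nat.factorial, q]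
      ring
  | succ n ih =>
      have hS : S L A (n+2) = S L A (n+1) + q L (n+1) * (ind A (n+1) - PA L A) :=
        Finset.sum_range_succ _ _
      rw [g, ih, b, b, hS]
      have h0 : (Nat.factorial (n+1) : ℝ) = (n+1) * (Nat.factorial n : ℝ) := by
        rw [Nat.factorial_succ]; push_cast; ring
      have hq : q L (n+1) = L ^ (n+1) / (Nat.factorial (n+1) : ℝ) := rfl
      rw [hq, h0]
      have hLp : L ^ (n+1) ≠ 0 := pow_ne_zero _ hL
      have hf : (Nat.factorial n : ℝ) ≠ 0 := (factorial_pos' n).ne'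
      field_simp
      push_cast; ring


/-- head partial sum for the singleton `{j}` -/
noncomputable def sH (j n : ℕ) : ℝ := (if j < n then q L j else 0) - pois L j * tt L n

lemma sH_tail (j n : ℕ) : sH L j n = pois L j * uu L n - (if n ≤ j then q L j else 0) := by
  have key : pois L j * (tt L n + uu L n) = q L j := by
    rw [tt_add_uu, pois_eq, mul_comm (Real.exp (-L)) (q L j), mul_assoc,
      ← Real.exp_add, neg_add_cancel, Real.exp_zero, mul_one]
  rw [sH]
  rcases lt_or_ge j n with h | h
  · rw [if_pos h, if_neg (not_le.2 h)]
    nlinarith [key]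
  · rw [if_neg (not_lt.2 h), if_pos h]
    nlinarith [key]

/-- increment of the singleton solution at location m+1 -/
noncomputable def w (m j : ℕ) : ℝ := b L (m+1) * sH L j (m+2) - b L m * sH L j (m+1)

lemma b_nonneg (hL : 0 < L) (m : ℕ) : 0 ≤ b L m := by
  unfold b; positivity

lemma L_mul_q' (i m : ℕ) : L * q L (i + (m+1)) = ((i+m+2:ℕ):ℝ) * q L (i+m+2) := by
  have h := L_mul_q L (i+(m+1))
  have e : i + (m+1) + 1 = i + m + 2 := by omega
  rw [e] at h
  rw [h]
  push_cast
  ring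

/-- inequality `(m+1) * uu (m+2) ≤ L * uu (m+1)` -/
lemma uu_le_L_uu (hL : 0 < L) (m : ℕ) : ((m:ℝ)+1) * uu L (m+2) ≤ L * uu L (m+1) := by
  rw [uu, uu, ← tsum_mul_left, ← tsum_mul_left]
  apply Summable.tsum_le_tsum
  · intro i
    rw [L_mul_q' L i m]
    have e : i + (m+2) = i + m + 2 := by omega
    rw [e]
    have hq := q_nonneg L hL.le (i+m+2)
    have hc : ((m:ℝ)+1) ≤ ((i+m+2:ℕ):ℝ) := by push_cast; linarith [Nat.cast_nonneg (α := ℝ) i]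
    nlinarith
  · exact (summable_q_tail L (m+2)).mul_left _
  · exact (summable_q_tail L (m+1)).mul_left L


lemma q_zero : q L 0 = 1 := by simp [q, Nat.factorial]

lemma b_succ (hL : L ≠ 0) (m : ℕ) : b L (m+1) = b L m * (((m:ℝ)+1)/L) := by
  unfold b
  rw [Nat.factorial_succ, pow_succ]
  push_cast
  field_simp

lemma L_tt_le' (hL : 0 < L) (m : ℕ) :
    L * tt L (m+1) ≤ ((m:ℝ)+1) * (tt L (m+2) - 1) := by
  have h1 : L * tt L (m+1) = ∑ i ∈ Finset.range (m+1), (i+1 : ℝ) * q L (i+1) := by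
    rw [tt, Finset.mul_sum]
    exact Finset.sum_congr rfl fun i _ => L_mul_q L i
  have h2 : ∑ i ∈ Finset.range (m+1), (i+1 : ℝ) * q L (i+1)
      ≤ ∑ i ∈ Finset.range (m+1), ((m:ℝ)+1) * q L (i+1) := by
    apply Finset.sum_le_sum
    intro i hi
    have hi' : (i:ℝ) ≤ m := by exact_mod_cast Nat.lt_succ_iff.1 (Finset.mem_range.1 hi)
    have hq := q_nonneg L hL.le (i+1)
    nlinarith
  have h4 : tt L (m+2) = (∑ i ∈ Finset.range (m+1), q L (i+1)) + q L 0 :=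
    Finset.sum_range_succ' (q L) (m+1)
  have h3 : ∑ i ∈ Finset.range (m+1), ((m:ℝ)+1) * q L (i+1)
      = ((m:ℝ)+1) * (tt L (m+2) - 1) := by
    rw [← Finset.mul_sum, h4, q_zero]
    ring
  linarith [h1, h2, h3]

lemma L_tt_le (hL : 0 < L) (m : ℕ) : L * tt L (m+1) ≤ ((m:ℝ)+1) * tt L (m+2) := by
  have h := L_tt_le' L hL m
  nlinarith [q_nonneg L hL.le 0]

lemma w_nonpos (hL : 0 < L) {m j : ℕ} (hj : j ≠ m+1) : w L m j ≤ 0 := by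
  have hpj := pois_nonneg L hL.le j
  rcases Nat.lt_or_ge j (m+1) with hlt | hge
  · -- j ≤ m : tail form
    rw [w, sH_tail, sH_tail, if_neg (by omega), if_neg (by omega)]
    have hb : b L (m+1) * uu L (m+2) ≤ b L m * uu L (m+1) := by
      rw [b_succ L hL.ne' m]
      have h := uu_le_L_uu L hL m
      have hbm := b_nonneg L hL m
      have h2 : b L m * (((m:ℝ)+1) * uu L (m+2)) ≤ b L m * (L * uu L (m+1)) :=
        mul_le_mul_of_nonneg_left h hbm
      calc b L m * (((m:ℝ)+1)/L) * uu L (m+2)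
          = (b L m * (((m:ℝ)+1) * uu L (m+2)))/L := by ring
        _ ≤ (b L m * (L * uu L (m+1)))/L := (div_le_div_iff_of_pos_right hL).2 h2
        _ = b L m * uu L (m+1) := by field_simp
    nlinarith
  · -- j ≥ m+2 : head form
    have hge2 : m + 2 ≤ j := by omega
    rw [w, sH, sH, if_neg (by omega), if_neg (by omega)]
    have hb : b L m * tt L (m+1) ≤ b L (m+1) * tt L (m+2) := by
      rw [b_succ L hL.ne' m]
      have h := L_tt_le L hL m
      have hbm := b_nonneg L hL m
      have h2 : b L m * (L * tt L (m+1)) ≤ b L m * (((m:ℝ)+1) * tt L (m+2)) :=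
        mul_le_mul_of_nonneg_left h hbm
      calc b L m * tt L (m+1) = (b L m * (L * tt L (m+1)))/L := by field_simp
        _ ≤ (b L m * (((m:ℝ)+1) * tt L (m+2)))/L := (div_le_div_iff_of_pos_right hL).2 h2
        _ = b L m * (((m:ℝ)+1)/L) * tt L (m+2) := by ring
    nlinarith

lemma w_diag_eq (m : ℕ) :
    w L m (m+1) = pois L (m+1) * (b L (m+1) * uu L (m+2) + b L m * tt L (m+1)) := by
  rw [w, sH_tail, sH, if_neg (by omega), if_neg (by omega)]
  ring

lemma w_diag_nonneg (hL : 0 < L) (m : ℕ) : 0 ≤ w L m (m+1) := by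
  rw [w_diag_eq]
  have h1 := pois_nonneg L hL.le (m+1)
  have h2 := b_nonneg L hL (m+1)
  have h3 := b_nonneg L hL m
  have h4 := uu_nonneg L hL.le (m+2)
  have h5 := tt_nonneg L hL.le (m+1)
  have := mul_nonneg h2 h4
  have := mul_nonneg h3 h5
  nlinarith

lemma pois_mul_b_succ (hL : 0 < L) (m : ℕ) :
    pois L (m+1) * b L (m+1) = Real.exp (-L) / L := by
  rw [pois, b, pow_succ]
  have h1 : (Nat.factorial (m+1) : ℝ) ≠ 0 := (factorial_pos' (m+1)).ne'
  have h2 : L ^ (m+1) ≠ 0 := pow_ne_zero _ hL.ne'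
  field_simp
  ring

lemma pois_mul_b (hL : 0 < L) (m : ℕ) :
    pois L (m+1) * b L m = Real.exp (-L) / ((m:ℝ)+1) := by
  rw [pois, b]
  have h0 : (Nat.factorial (m+1) : ℝ) = ((m:ℝ)+1) * (Nat.factorial m : ℝ) := by
    rw [Nat.factorial_succ]; push_cast; ring
  have h1 : (Nat.factorial m : ℝ) ≠ 0 := (factorial_pos' m).ne'
  have h2 : L ^ (m+1) ≠ 0 := pow_ne_zero _ hL.ne'
  have h3 : ((m:ℝ)+1) ≠ 0 := by positivity
  rw [h0]
  field_simp

lemma w_diag_le (hL : 0 < L) (m : ℕ) :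
    w L m (m+1) ≤ (1 - Real.exp (-L)) / L := by
  rw [w_diag_eq]
  have hM : (0:ℝ) < (m:ℝ)+1 := by positivity
  have hexp : (0:ℝ) < Real.exp (-L) := Real.exp_pos _
  have h1c : 1 - Real.exp (-L) = Real.exp (-L) * (tt L (m+2) + uu L (m+2) - 1) := by
    have hce : Real.exp (-L) * (tt L (m+2) + uu L (m+2)) = 1 := by
      rw [tt_add_uu, ← Real.exp_add, neg_add_cancel, Real.exp_zero]
    rw [mul_sub, hce, mul_one]
  have hexpand : pois L (m+1) * (b L (m+1) * uu L (m+2) + b L m * tt L (m+1))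
      = Real.exp (-L) / L * uu L (m+2) + Real.exp (-L) / ((m:ℝ)+1) * tt L (m+1) := by
    rw [mul_add, ← mul_assoc, ← mul_assoc, pois_mul_b_succ L hL, pois_mul_b L hL]
  rw [hexpand, h1c]
  have step : Real.exp (-L) / ((m:ℝ)+1) * tt L (m+1)
      ≤ Real.exp (-L) / L * (tt L (m+2) - 1) := by
    rw [div_mul_eq_mul_div, div_mul_eq_mul_div, div_le_div_iff₀ hM hL]
    nlinarith [L_tt_le' L hL m]
  have : Real.exp (-L) * (tt L (m+2) + uu L (m+2) - 1) / L
      = Real.exp (-L) / L * uu L (m+2) + Real.exp (-L) / L * (tt L (m+2) - 1) := by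
    field_simp
    ring
  rw [this]
  linarith


lemma S_eq (n : ℕ) :
    S L A n = (∑ j ∈ Finset.range n, Set.indicator A (q L) j) - PA L A * tt L n := by
  rw [S, tt, Finset.mul_sum, ← Finset.sum_sub_distrib]
  apply Finset.sum_congr rfl
  intro j _
  by_cases hj : j ∈ A <;>
    simp [ind, Set.indicator_of_mem, Set.indicator_of_notMem, hj] <;> ring

lemma hasSum_ind_sH (n : ℕ) :
    HasSum (fun j => Set.indicator A (fun j' => sH L j' n) j) (S L A n) := by
  have hpt : ∀ j, Set.indicator A (fun j' => sH L j' n) j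
      = Set.indicator A (fun j' => if j' < n then q L j' else 0) j
        - Set.indicator A (pois L) j * tt L n := by
    intro j
    by_cases hj : j ∈ A <;>
      simp [Set.indicator_of_mem, Set.indicator_of_notMem, hj, sH]
  have h1 : HasSum (fun j => Set.indicator A (fun j' => if j' < n then q L j' else 0) j)
      (∑ j ∈ Finset.range n, Set.indicator A (fun j' => if j' < n then q L j' else 0) j) := by
    apply hasSum_sum_of_ne_finset_zero
    intro b hb
    have hb' : ¬ b < n := by simpa using hb
    by_cases hbA : b ∈ A <;>
      simp [Set.indicator_of_mem, Set.indicator_of_notMem, hbA, hb']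
  have hsum_eq : ∑ j ∈ Finset.range n, Set.indicator A (fun j' => if j' < n then q L j' else 0) j
      = ∑ j ∈ Finset.range n, Set.indicator A (q L) j := by
    apply Finset.sum_congr rfl
    intro j hj
    have : j < n := Finset.mem_range.1 hj
    by_cases hjA : j ∈ A <;>
      simp [Set.indicator_of_mem, Set.indicator_of_notMem, hjA, this]
  rw [hsum_eq] at h1
  have h2 : HasSum (fun j => Set.indicator A (pois L) j * tt L n) (PA L A * tt L n) :=
    ((summable_pois L).indicator A).hasSum.mul_right _
  have h3 := h1.sub h2
  rw [S_eq]
  have hfe : (fun j => Set.indicator A (fun j' => sH L j' n) j)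
      = fun j => Set.indicator A (fun j' => if j' < n then q L j' else 0) j
        - Set.indicator A (pois L) j * tt L n := funext hpt
  rw [hfe]
  exact h3

lemma hasSum_ind_w (hL : L ≠ 0) (m : ℕ) :
    HasSum (fun j => Set.indicator A (w L m) j) (g L A (m+2) - g L A (m+1)) := by
  have hpt : ∀ j, Set.indicator A (w L m) j
      = b L (m+1) * Set.indicator A (fun j' => sH L j' (m+2)) j
        - b L m * Set.indicator A (fun j' => sH L j' (m+1)) j := by
    intro j
    by_cases hj : j ∈ A <;>
      simp [Set.indicator_of_mem, Set.indicator_of_notMem, hj, w]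
  have h := ((hasSum_ind_sH L A (m+2)).mul_left (b L (m+1))).sub
    ((hasSum_ind_sH L A (m+1)).mul_left (b L m))
  rw [g_closed L A hL (m+1), g_closed L A hL m]
  have hfe : (fun j => Set.indicator A (w L m) j)
      = fun j => b L (m+1) * Set.indicator A (fun j' => sH L j' (m+2)) j
        - b L m * Set.indicator A (fun j' => sH L j' (m+1)) j := funext hpt
  rw [hfe]
  exact h

lemma PA_univ : PA L Set.univ = 1 := by
  rw [PA]
  simp only [Set.indicator_univ]
  exact (hasSum_pois L).tsum_eq

lemma hasSum_w_zero (hL : L ≠ 0) (m : ℕ) : HasSum (w L m) 0 := by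
  have h := hasSum_ind_w L Set.univ hL m
  simp only [Set.indicator_univ] at h
  have hSu : ∀ n, S L Set.univ n = 0 := by
    intro n
    apply Finset.sum_eq_zero
    intro j _
    simp [ind, Set.indicator_univ, PA_univ]
  have hg : ∀ n, g L Set.univ (n+1) = 0 := by
    intro n
    rw [g_closed L Set.univ hL n, hSu, mul_zero]
  rw [hg, hg, sub_zero] at h
  exact h

lemma delta_nonneg (hL : 0 < L) : 0 ≤ (1 - Real.exp (-L)) / L := by
  apply div_nonneg _ hL.le
  have : Real.exp (-L) ≤ 1 := Real.exp_le_one_iff.2 (by linarith)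
  linarith

lemma diff_le (hL : 0 < L) (m : ℕ) :
    g L A (m+2) - g L A (m+1) ≤ (1 - Real.exp (-L)) / L := by
  have h := hasSum_ind_w L A hL.ne' m
  rw [← h.tsum_eq]
  have hsum2 : HasSum (fun j : ℕ => if j = m+1 then (1 - Real.exp (-L))/L else 0)
      ((1 - Real.exp (-L))/L) := hasSum_ite_eq (m+1) _
  refine le_trans (Summable.tsum_le_tsum ?_ h.summable hsum2.summable) (le_of_eq hsum2.tsum_eq)
  intro j
  by_cases hj : j = m+1
  · subst hj
    rw [if_pos rfl]
    by_cases hA : (m+1) ∈ A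
    · rw [Set.indicator_of_mem hA]
      exact w_diag_le L hL m
    · rw [Set.indicator_of_notMem hA]
      exact delta_nonneg L hL
  · rw [if_neg hj]
    by_cases hA : j ∈ A
    · rw [Set.indicator_of_mem hA]
      exact w_nonpos L hL hj
    · rw [Set.indicator_of_notMem hA]

lemma increment_abs (hL : 0 < L) (m : ℕ) :
    |g L A (m+2) - g L A (m+1)| ≤ (1 - Real.exp (-L)) / L := by
  have hup := diff_le L A hL m
  have hA := hasSum_ind_w L A hL.ne' m
  have hAc := hasSum_ind_w L Aᶜ hL.ne' m
  have hadd := hA.add hAc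
  have hfe : (fun j => Set.indicator A (w L m) j + Set.indicator Aᶜ (w L m) j) = w L m := by
    funext j
    exact congrFun (Set.indicator_self_add_compl A (w L m)) j
  rw [hfe] at hadd
  have hzero := (hadd.unique (hasSum_w_zero L hL.ne' m))
  have hupc := diff_le L Aᶜ hL m
  rw [abs_le]
  constructor
  · linarith
  · exact hup


lemma PA_eq_poisson (hL : 0 ≤ L) :
    ((poissonMeasure L.toNNReal) A).toReal = PA L A := by
  have hA : MeasurableSet A := (Set.to_countable A).measurableSet
  have hPo : poissonMeasure L.toNNReal A
      = ∑' j, A.indicator (fun n => ENNReal.ofReal (poissonPMFReal L.toNNReal n)) j := by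
    rw [poissonMeasure, Measure.sum_apply _ hA]
    congr 1; funext j; by_cases hj : j ∈ A <;> simp [hj, poissonPMFReal]
  rw [hPo]
  rw [ENNReal.tsum_toReal_eq]
  · rw [PA]
    congr 1
    funext j
    by_cases hj : j ∈ A
    · rw [Set.indicator_of_mem hj, Set.indicator_of_mem hj]
      show (ENNReal.ofReal (poissonPMFReal L.toNNReal j)).toReal = pois L j
      rw [ENNReal.toReal_ofReal poissonPMFReal_nonneg]
      rw [poissonPMFReal, pois]
      rw [Real.coe_toNNReal L hL]
      ring
    · rw [Set.indicator_of_notMem hj, Set.indicator_of_notMem hj]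
      rfl
  · intro a
    by_cases ha : a ∈ A
    · rw [Set.indicator_of_mem ha]
      exact ENNReal.ofReal_ne_top
    · rw [Set.indicator_of_notMem ha]
      exact ENNReal.zero_ne_top

end ChenSteinAux


open Set Filter

/-- Chen–Stein bound: if `W = X₁ + … + X_k` is a sum of independent Bernoulli random
variables with parameters `p₁, …, p_k` and `λ = Σ pᵢ > 0`, then for every `A ⊆ ℕ`,
`|P(W ∈ A) - Poisson(λ)(A)| ≤ ((1 - e^{-λ})/λ) Σ pᵢ²` (i.e. the total variation
distance between the law of `W` and `Poisson(λ)` is at most that bound). -/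
theorem stmt6 {Ω : Type*} [MeasurableSpace Ω] (μ : Measure Ω) [IsProbabilityMeasure μ]
    (k : ℕ) (p : Fin k → ℝ) (X : Fin k → Ω → ℕ)
    (hp : ∀ i, 0 ≤ p i) (hp1 : ∀ i, p i ≤ 1)
    (hmeas : ∀ i, Measurable (X i))
    (hBern1 : ∀ i, μ {ω | X i ω = 1} = ENNReal.ofReal (p i))
    (hBern0 : ∀ i, μ {ω | X i ω = 0} = ENNReal.ofReal (1 - p i))
    (hindep : iIndepFun X μ)
    (hpos : 0 < ∑ i, p i) :
    ∀ A : Set ℕ,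
      |(μ.map (fun ω => ∑ i, X i ω) A).toReal
          - (poissonMeasure (∑ i, p i).toNNReal A).toReal|
        ≤ ((1 - Real.exp (-(∑ i, p i))) / (∑ i, p i)) * ∑ i, (p i) ^ 2 := by
  intro A
  have hA : MeasurableSet A := (Set.to_countable A).measurableSet
  set L : ℝ := ∑ i, p i with hLdef
  set W : Ω → ℕ := fun ω => ∑ i, X i ω with hWdef
  set Y : Fin k → Ω → ℕ := fun i ω => ∑ j ∈ Finset.univ.erase i, X j ω with hYdef
  set g : ℕ → ℝ := ChenSteinAux.g L A with hgdef
  set PAr : ℝ := ChenSteinAux.PA L A with hPAdef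
  set Δ : ℝ := (1 - Real.exp (-L)) / L with hDdef
  have hDnonneg : 0 ≤ Δ := ChenSteinAux.delta_nonneg L hpos
  have hWmeas : Measurable W := Finset.measurable_sum _ (fun i _ => hmeas i)
  have hYmeas : ∀ i, Measurable (Y i) := fun i =>
    Finset.measurable_sum _ (fun j _ => hmeas j)
  have hWeq : ∀ (i : Fin k) ω, W ω = X i ω + Y i ω := by
    intro i ω
    exact (Finset.add_sum_erase Finset.univ (fun j => X j ω) (Finset.mem_univ i)).symm
  -- measurability of level sets
  have hm1 : ∀ i, MeasurableSet {ω | X i ω = 1} := fun i =>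
    hmeas i (measurableSet_singleton 1)
  have hm0 : ∀ i, MeasurableSet {ω | X i ω = 0} := fun i =>
    hmeas i (measurableSet_singleton 0)
  -- a.e. Bernoulli values
  have hae : ∀ i, ∀ᵐ ω ∂μ, X i ω = 0 ∨ X i ω = 1 := by
    intro i
    have hdisj : Disjoint {ω | X i ω = 0} {ω | X i ω = 1} := by
      rw [Set.disjoint_left]
      rintro ω h0 h1
      simp only [Set.mem_setOf_eq] at h0 h1
      omega
    have hu : μ ({ω | X i ω = 0} ∪ {ω | X i ω = 1}) = 1 := by
      rw [measure_union hdisj (hm1 i), hBern0 i, hBern1 i,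
        ← ENNReal.ofReal_add (by linarith [hp1 i]) (hp i)]
      norm_num
    have hc : μ ({ω | X i ω = 0} ∪ {ω | X i ω = 1})ᶜ = 0 := by
      rw [measure_compl ((hm0 i).union (hm1 i)) (measure_ne_top μ _), hu, measure_univ]
      simp
    rw [MeasureTheory.ae_iff]
    have hset : {ω | ¬(X i ω = 0 ∨ X i ω = 1)} = ({ω | X i ω = 0} ∪ {ω | X i ω = 1})ᶜ := by
      ext ω
      simp [Set.mem_setOf_eq]
    rw [hset]
    exact hc
  have hWle : ∀ᵐ ω ∂μ, W ω ≤ k := by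
    have h := (MeasureTheory.ae_all_iff).2 hae
    filter_upwards [h] with ω hω
    calc W ω = ∑ i, X i ω := rfl
      _ ≤ ∑ _i : Fin k, 1 := Finset.sum_le_sum (fun i _ => by rcases hω i with h | h <;> omega)
      _ = k := by simp
  have hYle : ∀ i, ∀ᵐ ω ∂μ, Y i ω ≤ k + 2 := by
    intro i
    filter_upwards [hWle] with ω hω
    have := hWeq i ω
    omega
  have hWle' : ∀ᵐ ω ∂μ, W ω ≤ k + 2 := by
    filter_upwards [hWle] with ω hω; omega
  have hXle : ∀ i, ∀ᵐ ω ∂μ, X i ω ≤ k + 2 := by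
    intro i
    filter_upwards [hae i] with ω hω
    rcases hω with h | h <;> omega
  -- integrability helpers
  have hInt : ∀ (f : ℕ → ℝ) (Z : Ω → ℕ), Measurable Z → (∀ᵐ ω ∂μ, Z ω ≤ k + 2) →
      Integrable (fun ω => f (Z ω)) μ := by
    intro f Z hZ hZle
    apply Integrable.mono' (integrable_const (∑ n ∈ Finset.range (k+3), |f n|))
      ((measurable_from_top.comp hZ).aestronglyMeasurable)
    filter_upwards [hZle] with ω hω
    rw [Real.norm_eq_abs]
    exact Finset.single_le_sum (f := fun n => |f n|) (fun n _ => abs_nonneg _)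
      (Finset.mem_range.2 (by omega))
  have hInt2 : ∀ (f : ℕ → ℝ) (Z : Ω → ℕ) (i : Fin k), Measurable Z →
      (∀ᵐ ω ∂μ, Z ω ≤ k + 2) → Integrable (fun ω => (X i ω : ℝ) * f (Z ω)) μ := by
    intro f Z i hZ hZle
    apply Integrable.mono' (integrable_const (∑ n ∈ Finset.range (k+3), |f n|))
      (((measurable_from_top.comp (hmeas i)).mul
        (measurable_from_top.comp hZ)).aestronglyMeasurable)
    filter_upwards [hZle, hae i] with ω hω hX
    show ‖(X i ω : ℝ) * f (Z ω)‖ ≤ _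
    rw [Real.norm_eq_abs, abs_mul]
    have h1 : |f (Z ω)| ≤ ∑ n ∈ Finset.range (k+3), |f n| :=
      Finset.single_le_sum (f := fun n => |f n|) (fun n _ => abs_nonneg _)
        (Finset.mem_range.2 (by omega))
    have h2 : |(X i ω : ℝ)| ≤ 1 := by
      rcases hX with h | h <;> simp [h]
    calc |(X i ω : ℝ)| * |f (Z ω)| ≤ 1 * (∑ n ∈ Finset.range (k+3), |f n|) :=
          mul_le_mul h2 h1 (abs_nonneg _) zero_le_one
      _ = _ := one_mul _
  -- expectation of X i
  have hEX : ∀ i, ∫ ω, (X i ω : ℝ) ∂μ = p i := by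
    intro i
    have hcongr : (fun ω => (X i ω : ℝ))
        =ᵐ[μ] Set.indicator {ω | X i ω = 1} (fun _ => (1:ℝ)) := by
      filter_upwards [hae i] with ω hω
      rcases hω with h | h
      · rw [Set.indicator_of_notMem (by simp [Set.mem_setOf_eq, h])]
        simp [h]
      · rw [Set.indicator_of_mem (by simp [Set.mem_setOf_eq, h])]
        simp [h]
    rw [integral_congr_ae hcongr, integral_indicator_const _ (hm1 i), measureReal_def, hBern1 i]
    simp [ENNReal.toReal_ofReal (hp i)]
  -- independence
  have hIndep : ∀ i, IndepFun (X i) (Y i) μ := by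
    intro i
    have h := (hindep.indepFun_finsetSum_of_notMem hmeas
      (Finset.notMem_erase i Finset.univ)).symm
    have he : (∑ j ∈ Finset.univ.erase i, X j) = Y i := by
      funext ω
      simp [hYdef, Finset.sum_apply]
    rwa [he] at h
  have hIndepInt : ∀ (f : ℕ → ℝ) (i : Fin k),
      ∫ ω, (X i ω : ℝ) * f (Y i ω) ∂μ = p i * ∫ ω, f (Y i ω) ∂μ := by
    intro f i
    have hind : IndepFun (fun ω => (X i ω : ℝ)) (fun ω => f (Y i ω)) μ :=
      (hIndep i).comp measurable_from_top measurable_from_top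
    have h := hind.integral_mul_eq_mul_integral
      (hInt (fun n => (n : ℝ)) (X i) (hmeas i) (hXle i)).aestronglyMeasurable
      (hInt f (Y i) (hYmeas i) (hYle i)).aestronglyMeasurable
    rw [← hEX i]
    exact h
    -- Stein equation and increment bound
  have hstein : ∀ n : ℕ, L * g (n+1) - (n:ℝ) * g n = ChenSteinAux.ind A n - PAr :=
    ChenSteinAux.stein_eq L A hpos.ne'
  have hginc : ∀ m : ℕ, |g (m+2) - g (m+1)| ≤ Δ :=
    ChenSteinAux.increment_abs L A hpos
  have hmap : (μ.map W A).toReal = ∫ ω, ChenSteinAux.ind A (W ω) ∂μ := by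
    rw [Measure.map_apply hWmeas hA]
    have hpt : (fun ω => ChenSteinAux.ind A (W ω))
        = Set.indicator (W ⁻¹' A) (fun _ => (1:ℝ)) := by
      funext ω
      rw [ChenSteinAux.ind_def]
      by_cases hω : W ω ∈ A
      · rw [Set.indicator_of_mem hω, Set.indicator_of_mem (Set.mem_preimage.mpr hω)]
      · rw [Set.indicator_of_notMem hω,
          Set.indicator_of_notMem (fun h => hω (Set.mem_preimage.mp h))]
    rw [hpt, integral_indicator_const _ (hWmeas hA), measureReal_def]
    simp
  have hpois : ((poissonMeasure L.toNNReal) A).toReal = PAr :=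
    ChenSteinAux.PA_eq_poisson L A hpos.le
  have hIntInd : Integrable (fun ω => ChenSteinAux.ind A (W ω)) μ :=
    hInt (ChenSteinAux.ind A) W hWmeas hWle'
  have hdiff : (μ.map W A).toReal - ((poissonMeasure L.toNNReal) A).toReal
      = ∫ ω, (L * g (W ω + 1) - (W ω : ℝ) * g (W ω)) ∂μ := by
    have h1 : ∫ ω, (L * g (W ω + 1) - (W ω : ℝ) * g (W ω)) ∂μ
        = ∫ ω, (ChenSteinAux.ind A (W ω) - PAr) ∂μ := by
      apply integral_congr_ae
      apply Filter.Eventually.of_forall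
      intro ω
      exact hstein (W ω)
    rw [hmap, hpois, h1, integral_sub hIntInd (integrable_const PAr), integral_const]
    simp
  have hptsum : ∀ ω, L * g (W ω + 1) - (W ω : ℝ) * g (W ω)
      = ∑ i, (p i * g (W ω + 1) - (X i ω : ℝ) * g (W ω)) := by
    intro ω
    rw [Finset.sum_sub_distrib, ← Finset.sum_mul, ← Finset.sum_mul, ← hLdef]
    have hc : ((W ω : ℕ) : ℝ) = ∑ i, (X i ω : ℝ) := by
      rw [hWdef]
      exact_mod_cast Nat.cast_sum Finset.univ (fun i => X i ω)
    rw [hc]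
  have hIntTerm : ∀ i : Fin k,
      Integrable (fun ω => p i * g (W ω + 1) - (X i ω : ℝ) * g (W ω)) μ := by
    intro i
    exact ((hInt (fun n => g (n+1)) W hWmeas hWle').const_mul (p i)).sub
      (hInt2 g W i hWmeas hWle')
  have hsplit : ∫ ω, (L * g (W ω + 1) - (W ω : ℝ) * g (W ω)) ∂μ
      = ∑ i, ∫ ω, (p i * g (W ω + 1) - (X i ω : ℝ) * g (W ω)) ∂μ := by
    rw [show (fun ω => L * g (W ω + 1) - (W ω : ℝ) * g (W ω))
      = fun ω => ∑ i, (p i * g (W ω + 1) - (X i ω : ℝ) * g (W ω)) from funext hptsum]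
    exact integral_finset_sum _ (fun i _ => hIntTerm i)
  have hterm : ∀ i : Fin k, ∫ ω, (p i * g (W ω + 1) - (X i ω : ℝ) * g (W ω)) ∂μ
      = p i ^ 2 * ∫ ω, (g (Y i ω + 2) - g (Y i ω + 1)) ∂μ := by
    intro i
    have hB : (fun ω => g (W ω + 1)) =ᵐ[μ]
        (fun ω => g (Y i ω + 1) + (X i ω : ℝ) * (g (Y i ω + 2) - g (Y i ω + 1))) := by
      filter_upwards [hae i] with ω hω
      rcases hω with h | h
      · have he : W ω = Y i ω := by rw [hWeq i ω, h, Nat.zero_add]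
        rw [he, h]
        simp
      · have he : W ω = Y i ω + 1 := by rw [hWeq i ω, h]; omega
        have he2 : Y i ω + 1 + 1 = Y i ω + 2 := rfl
        rw [he, he2, h]
        push_cast
        ring
    have hA2 : (fun ω => (X i ω : ℝ) * g (W ω)) =ᵐ[μ]
        (fun ω => (X i ω : ℝ) * g (Y i ω + 1)) := by
      filter_upwards [hae i] with ω hω
      rcases hω with h | h
      · simp [h]
      · have he : W ω = Y i ω + 1 := by rw [hWeq i ω, h]; omega
        rw [he]
    have e1 : ∫ ω, g (W ω + 1) ∂μ
        = (∫ ω, g (Y i ω + 1) ∂μ) + p i * ∫ ω, (g (Y i ω + 2) - g (Y i ω + 1)) ∂μ := by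
      rw [integral_congr_ae hB,
        integral_add (hInt (fun n => g (n+1)) (Y i) (hYmeas i) (hYle i))
          (hInt2 (fun n => g (n+2) - g (n+1)) (Y i) i (hYmeas i) (hYle i)),
        hIndepInt (fun n => g (n+2) - g (n+1)) i]
    have e2 : ∫ ω, (X i ω : ℝ) * g (W ω) ∂μ = p i * ∫ ω, g (Y i ω + 1) ∂μ := by
      rw [integral_congr_ae hA2, hIndepInt (fun n => g (n+1)) i]
    rw [integral_sub ((hInt (fun n => g (n+1)) W hWmeas hWle').const_mul (p i))
      (hInt2 g W i hWmeas hWle'), MeasureTheory.integral_const_mul, e1, e2]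
    ring
  have habs : ∀ i : Fin k, |∫ ω, (g (Y i ω + 2) - g (Y i ω + 1)) ∂μ| ≤ Δ := by
    intro i
    have h := norm_integral_le_of_norm_le_const (μ := μ)
      (f := fun ω => g (Y i ω + 2) - g (Y i ω + 1)) (C := Δ)
      (Filter.Eventually.of_forall (fun ω => by
        rw [Real.norm_eq_abs]
        exact hginc (Y i ω)))
    simpa [measure_univ] using h
  rw [hdiff, hsplit]
  calc |∑ i, ∫ ω, (p i * g (W ω + 1) - (X i ω : ℝ) * g (W ω)) ∂μ|
      ≤ ∑ i, |∫ ω, (p i * g (W ω + 1) - (X i ω : ℝ) * g (W ω)) ∂μ| :=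
        Finset.abs_sum_le_sum_abs _ _
    _ ≤ ∑ i, p i ^ 2 * Δ := by
        apply Finset.sum_le_sum
        intro i _
        rw [hterm i, abs_mul, abs_of_nonneg (sq_nonneg (p i))]
        exact mul_le_mul_of_nonneg_left (habs i) (sq_nonneg _)
    _ = Δ * ∑ i, p i ^ 2 := by
        rw [Finset.mul_sum]
        exact Finset.sum_congr rfl (fun i _ => mul_comm _ _)
end

section
/- Let N ∼ Binomial(n, p) with np > 0. Then ‖L(N) − Poisson(np)‖_TV ≤ (1/(np)) · n p² = p. -/
open Real Set Filter MeasureTheory ProbabilityTheory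
open scoped NNReal ENNReal

namespace SteinChen

noncomputable def ppow (lam : ℝ) (k : ℕ) : ℝ := lam ^ k / k.factorial

noncomputable def Spart (lam : ℝ) (m : ℕ) : ℝ := ∑ i ∈ Finset.range m, ppow lam i

noncomputable def ptail (lam : ℝ) (m : ℕ) : ℝ := Real.exp lam - Spart lam m

lemma hasSum_ppow (lam : ℝ) : HasSum (ppow lam) (Real.exp lam) := by
  rw [Real.exp_eq_exp_ℝ]
  exact NormedSpace.expSeries_div_hasSum_exp lam

lemma summable_ppow (lam : ℝ) : Summable (ppow lam) := (hasSum_ppow lam).summable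

lemma ppow_nonneg {lam : ℝ} (hl : 0 ≤ lam) (k : ℕ) : 0 ≤ ppow lam k := by
  unfold ppow; positivity

lemma ptail_eq (lam : ℝ) (m : ℕ) : ptail lam m = ∑' i, ppow lam (i + m) := by
  have := Summable.sum_add_tsum_nat_add (f := ppow lam) m (summable_ppow lam)
  rw [(hasSum_ppow lam).tsum_eq] at this
  unfold ptail Spart
  linarith

lemma summable_ppow_add (lam : ℝ) (m : ℕ) : Summable (fun i => ppow lam (i + m)) :=
  (summable_nat_add_iff m).mpr (summable_ppow lam)

lemma ptail_nonneg {lam : ℝ} (hl : 0 ≤ lam) (m : ℕ) : 0 ≤ ptail lam m := by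
  rw [ptail_eq]
  exact tsum_nonneg fun i => ppow_nonneg hl _

lemma Spart_nonneg {lam : ℝ} (hl : 0 ≤ lam) (m : ℕ) : 0 ≤ Spart lam m :=
  Finset.sum_nonneg fun i _ => ppow_nonneg hl i

lemma Spart_succ (lam : ℝ) (m : ℕ) : Spart lam (m + 1) = Spart lam m + ppow lam m :=
  Finset.sum_range_succ _ _

/-- L1 : `j * ptail (j+1) ≤ lam * ptail j`. -/
lemma L1 {lam : ℝ} (hl : 0 < lam) (j : ℕ) :
    (j : ℝ) * ptail lam (j + 1) ≤ lam * ptail lam j := by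
  rw [ptail_eq, ptail_eq, ← tsum_mul_left, ← tsum_mul_left]
  apply Summable.tsum_le_tsum _ ((summable_ppow_add lam (j+1)).mul_left _)
    ((summable_ppow_add lam j).mul_left _)
  intro i
  unfold ppow
  have h1 : i + (j + 1) = (i + j) + 1 := by omega
  rw [h1, pow_succ, Nat.factorial_succ]
  push_cast
  rw [mul_div_assoc', mul_div_assoc', div_le_div_iff₀ (by positivity) (by positivity)]
  have hj : (j : ℝ) ≤ (i : ℝ) + j + 1 := by push_cast; linarith [Nat.cast_nonneg (α := ℝ) i]
  have hp : (0:ℝ) ≤ lam ^ (i+j) * lam := by positivity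
  have hf : (0:ℝ) ≤ ((i+j).factorial : ℝ) := by positivity
  nlinarith [mul_le_mul_of_nonneg_right (mul_le_mul_of_nonneg_right hj hp) hf]


/-- L3' : `lam * Spart j ≤ j * (Spart (j+1) - 1)`. -/
lemma L3' {lam : ℝ} (hl : 0 < lam) (j : ℕ) :
    lam * Spart lam j ≤ (j : ℝ) * (Spart lam (j + 1) - 1) := by
  have h1 : Spart lam (j+1) - 1 = ∑ i ∈ Finset.range j, ppow lam (i+1) := by
    unfold Spart
    rw [Finset.sum_range_succ' (ppow lam) j]
    simp [ppow]
  rw [h1]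
  unfold Spart
  rw [Finset.mul_sum, Finset.mul_sum]
  apply Finset.sum_le_sum
  intro i hi
  rw [Finset.mem_range] at hi
  unfold ppow
  rw [pow_succ, Nat.factorial_succ]
  push_cast
  rw [mul_div_assoc', mul_div_assoc', mul_comm lam (lam ^ i),
    div_le_div_iff₀ (by positivity) (by positivity)]
  have hj : (i : ℝ) + 1 ≤ (j : ℝ) := by exact_mod_cast hi
  have hp : (0:ℝ) ≤ lam ^ i * lam := by positivity
  have hf : (0:ℝ) ≤ ((i).factorial : ℝ) := by positivity
  nlinarith [mul_le_mul_of_nonneg_right (mul_le_mul_of_nonneg_right hj hp) hf]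

/-- L2 : `lam * Spart j ≤ j * Spart (j+1)`. -/
lemma L2 {lam : ℝ} (hl : 0 < lam) (j : ℕ) :
    lam * Spart lam j ≤ (j : ℝ) * Spart lam (j + 1) := by
  refine (L3' hl j).trans ?_
  have : Spart lam (j+1) - 1 ≤ Spart lam (j+1) := by linarith
  exact mul_le_mul_of_nonneg_left this (Nat.cast_nonneg j)

section SteinFunction

variable (lam : ℝ) (A : Set ℕ)

/-- The Poisson pmf (unnormalized notation). -/
noncomputable def pp (k : ℕ) : ℝ := Real.exp (-lam) * ppow lam k

/-- Poisson cdf-type partial sum. -/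
noncomputable def FF (m : ℕ) : ℝ := ∑ i ∈ Finset.range m, pp lam i

noncomputable def SA (j : ℕ) : ℝ := ∑ i ∈ Finset.range j, A.indicator (pp lam) i

/-- Total Poisson mass of `A`. -/
noncomputable def PA : ℝ := ∑' k, A.indicator (pp lam) k

noncomputable def TA (j : ℕ) : ℝ := PA lam A - SA lam A j

noncomputable def cc (j : ℕ) : ℝ := (j - 1).factorial * Real.exp lam / lam ^ j

noncomputable def UU (j : ℕ) : ℝ := cc lam j * FF lam j

noncomputable def VV (j : ℕ) : ℝ := cc lam j * (1 - FF lam j)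

/-- The Stein solution. -/
noncomputable def ff (j : ℕ) : ℝ := cc lam j * (SA lam A j - PA lam A * FF lam j)

variable {lam A}

lemma FF_eq (m : ℕ) : FF lam m = Real.exp (-lam) * Spart lam m := by
  unfold FF Spart pp; rw [Finset.mul_sum]

lemma one_sub_FF (m : ℕ) : 1 - FF lam m = Real.exp (-lam) * ptail lam m := by
  rw [FF_eq, ptail, mul_sub, ← Real.exp_add]
  simp

lemma pp_nonneg (hl : 0 ≤ lam) (k : ℕ) : 0 ≤ pp lam k := by
  have := ppow_nonneg hl k; unfold pp; positivity

lemma summable_pp (hl : 0 ≤ lam) : Summable (pp lam) := (summable_ppow lam).mul_left _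

lemma summable_ind (hl : 0 ≤ lam) : Summable (A.indicator (pp lam)) := by
  apply (summable_pp hl).of_nonneg_of_le _ _
  · intro k
    exact Set.indicator_nonneg (fun i _ => pp_nonneg hl i) k
  · intro k
    exact Set.indicator_le_self' (fun i _ => pp_nonneg hl i) k

lemma SA_nonneg (hl : 0 ≤ lam) (j : ℕ) : 0 ≤ SA lam A j :=
  Finset.sum_nonneg fun i _ => Set.indicator_nonneg (fun i _ => pp_nonneg hl i) i

lemma SA_le_FF (hl : 0 ≤ lam) (j : ℕ) : SA lam A j ≤ FF lam j :=
  Finset.sum_le_sum fun i _ => Set.indicator_le_self' (fun i _ => pp_nonneg hl i) i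

lemma SA_succ (j : ℕ) : SA lam A (j+1) = SA lam A j + A.indicator (pp lam) j :=
  Finset.sum_range_succ _ _

lemma FF_succ (j : ℕ) : FF lam (j+1) = FF lam j + pp lam j :=
  Finset.sum_range_succ _ _

lemma TA_eq (hl : 0 ≤ lam) (j : ℕ) :
    TA lam A j = ∑' i, A.indicator (pp lam) (i + j) := by
  have := Summable.sum_add_tsum_nat_add (f := A.indicator (pp lam)) j (summable_ind hl)
  unfold TA PA SA
  linarith

lemma TA_nonneg (hl : 0 ≤ lam) (j : ℕ) : 0 ≤ TA lam A j := by
  rw [TA_eq hl]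
  exact tsum_nonneg fun i => Set.indicator_nonneg (fun i _ => pp_nonneg hl i) _

lemma TA_le (hl : 0 ≤ lam) (j : ℕ) : TA lam A j ≤ 1 - FF lam j := by
  rw [TA_eq hl, one_sub_FF, ptail_eq, ← tsum_mul_left]
  apply Summable.tsum_le_tsum _ ((summable_ind hl).comp_injective (add_left_injective j))
    ((summable_ppow_add lam j).mul_left _)
  intro i
  exact (Set.indicator_le_self' (fun i _ => pp_nonneg hl i) _)

end SteinFunction
section Bounds

variable {lam : ℝ} {A : Set ℕ}

lemma VV_eq (hl : 0 < lam) (j : ℕ) :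
    VV lam j = (j-1).factorial * ptail lam j / lam ^ j := by
  unfold VV cc
  rw [one_sub_FF, Real.exp_neg]
  have h1 : Real.exp lam ≠ 0 := Real.exp_ne_zero lam
  field_simp

lemma UU_eq (hl : 0 < lam) (j : ℕ) :
    UU lam j = (j-1).factorial * Spart lam j / lam ^ j := by
  unfold UU cc
  rw [FF_eq, Real.exp_neg]
  have h1 : Real.exp lam ≠ 0 := Real.exp_ne_zero lam
  field_simp

lemma VV_mono (hl : 0 < lam) (m : ℕ) : VV lam (m+2) ≤ VV lam (m+1) := by
  rw [VV_eq hl, VV_eq hl]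
  simp only [show ∀ m : ℕ, m+2-1 = m+1 from fun m => by omega, Nat.add_sub_cancel]
  have h1 := L1 hl (m+1)
  push_cast at h1
  rw [div_le_div_iff₀ (by positivity) (by positivity)]
  have hfac : ((m+1).factorial : ℝ) = ((m:ℝ)+1) * m.factorial := by
    rw [Nat.factorial_succ]; push_cast; ring
  have hpow : lam ^ (m+2) = lam * lam ^ (m+1) := by ring
  rw [hfac, hpow]
  have hf : (0:ℝ) ≤ (m.factorial : ℝ) * lam ^ (m+1) := by positivity
  nlinarith [mul_le_mul_of_nonneg_left h1 hf]

lemma UU_mono (hl : 0 < lam) (m : ℕ) : UU lam (m+1) ≤ UU lam (m+2) := by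
  rw [UU_eq hl, UU_eq hl]
  simp only [show ∀ m : ℕ, m+2-1 = m+1 from fun m => by omega, Nat.add_sub_cancel]
  have h1 := L2 hl (m+1)
  push_cast at h1
  rw [div_le_div_iff₀ (by positivity) (by positivity)]
  have hfac : ((m+1).factorial : ℝ) = ((m:ℝ)+1) * m.factorial := by
    rw [Nat.factorial_succ]; push_cast; ring
  have hpow : lam ^ (m+2) = lam * lam ^ (m+1) := by ring
  rw [hfac, hpow]
  have hf : (0:ℝ) ≤ (m.factorial : ℝ) * lam ^ (m+1) := by positivity
  nlinarith [mul_le_mul_of_nonneg_left h1 hf]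

lemma VV_nonneg (hl : 0 < lam) (j : ℕ) : 0 ≤ VV lam j := by
  rw [VV_eq hl]
  have := ptail_nonneg hl.le j
  positivity

lemma UU_nonneg (hl : 0 < lam) (j : ℕ) : 0 ≤ UU lam j := by
  rw [UU_eq hl]
  have := Spart_nonneg hl.le j
  positivity

lemma key_bound (hl : 0 < lam) (m : ℕ) :
    pp lam (m+1) * (VV lam (m+2) + UU lam (m+1)) ≤ 1 / lam := by
  have h3 := L3' hl (m+1)
  push_cast at h3
  have htail : ptail lam (m+2) = Real.exp lam - Spart lam (m+2) := rfl
  have key3 : ((m:ℝ)+1) * ptail lam (m+2) + lam * Spart lam (m+1)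
      ≤ ((m:ℝ)+1) * Real.exp lam := by nlinarith
  have hfac : ((m+1).factorial : ℝ) = ((m:ℝ)+1) * m.factorial := by
    rw [Nat.factorial_succ]; push_cast; ring
  have eqPV : pp lam (m+1) * (VV lam (m+2) + UU lam (m+1))
      = Real.exp (-lam) * (((m:ℝ)+1) * ptail lam (m+2) + lam * Spart lam (m+1))
        / (lam * (((m:ℝ)+1))) := by
    rw [VV_eq hl, UU_eq hl]
    unfold pp ppow
    simp only [show ∀ m : ℕ, m+2-1 = m+1 from fun m => by omega, Nat.add_sub_cancel]
    rw [hfac]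
    have h0 : (m.factorial : ℝ) ≠ 0 := by positivity
    have h2 : (0:ℝ) < (m:ℝ) + 1 := by positivity
    field_simp
    ring
  rw [eqPV]
  rw [div_le_div_iff₀ (by positivity) hl]
  calc Real.exp (-lam) * (((m:ℝ)+1) * ptail lam (m+2) + lam * Spart lam (m+1)) * lam
      ≤ Real.exp (-lam) * (((m:ℝ)+1) * Real.exp lam) * lam := by
        have h5 : (0:ℝ) ≤ Real.exp (-lam) := (Real.exp_pos _).le
        nlinarith [mul_le_mul_of_nonneg_left key3 h5]
    _ = 1 * (lam * ((m:ℝ)+1)) := by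
        rw [Real.exp_neg]
        field_simp

lemma ff_eq (j : ℕ) :
    ff lam A j = VV lam j * SA lam A j - UU lam j * TA lam A j := by
  unfold ff VV UU TA; ring

lemma delta_eq (j : ℕ) :
    ff lam A (j+1) - ff lam A j
      = (VV lam (j+1) - VV lam j) * SA lam A j
        - (UU lam (j+1) - UU lam j) * TA lam A (j+1)
        + A.indicator (pp lam) j * (VV lam (j+1) + UU lam j) := by
  have hT : TA lam A j = TA lam A (j+1) + A.indicator (pp lam) j := by
    unfold TA; rw [SA_succ]; ring
  rw [ff_eq, ff_eq, SA_succ, hT]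
  ring

lemma zero_identity (j : ℕ) :
    (VV lam (j+1) - VV lam j) * FF lam j
      - (UU lam (j+1) - UU lam j) * (1 - FF lam (j+1))
      + pp lam j * (VV lam (j+1) + UU lam j) = 0 := by
  unfold VV UU
  rw [FF_succ]
  ring

lemma abs_delta (hl : 0 < lam) (m : ℕ) :
    |ff lam A (m+2) - ff lam A (m+1)| ≤ 1 / lam := by
  have hV := VV_mono hl m
  have hU := UU_mono hl m
  have hS0 := SA_nonneg (A := A) hl.le (m+1)
  have hSF := SA_le_FF (A := A) hl.le (m+1)
  have hT0 := TA_nonneg (A := A) hl.le (m+2)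
  have hT1 := TA_le (A := A) hl.le (m+2)
  have hind0 : 0 ≤ A.indicator (pp lam) (m+1) :=
    Set.indicator_nonneg (fun i _ => pp_nonneg hl.le i) _
  have hind1 : A.indicator (pp lam) (m+1) ≤ pp lam (m+1) :=
    Set.indicator_le_self' (fun i _ => pp_nonneg hl.le i) _
  have hVU0 : 0 ≤ VV lam (m+2) + UU lam (m+1) :=
    add_nonneg (VV_nonneg hl _) (UU_nonneg hl _)
  have hKey := key_bound hl m
  have hZ := zero_identity (lam := lam) (m+1)
  have hD := delta_eq (lam := lam) (A := A) (m+1)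
  rw [abs_le]
  constructor
  · rw [hD]
    have s1 : (VV lam (m+2) - VV lam (m+1)) * SA lam A (m+1)
        ≥ (VV lam (m+2) - VV lam (m+1)) * FF lam (m+1) :=
      mul_le_mul_of_nonpos_left hSF (by linarith)
    have s2 : (UU lam (m+2) - UU lam (m+1)) * TA lam A (m+2)
        ≤ (UU lam (m+2) - UU lam (m+1)) * (1 - FF lam (m+2)) :=
      mul_le_mul_of_nonneg_left hT1 (by linarith)
    have s3 : 0 ≤ A.indicator (pp lam) (m+1) * (VV lam (m+2) + UU lam (m+1)) :=
      mul_nonneg hind0 hVU0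
    linarith
  · rw [hD]
    have t1 : (VV lam (m+2) - VV lam (m+1)) * SA lam A (m+1) ≤ 0 :=
      mul_nonpos_of_nonpos_of_nonneg (by linarith) hS0
    have t2 : 0 ≤ (UU lam (m+2) - UU lam (m+1)) * TA lam A (m+2) :=
      mul_nonneg (by linarith) hT0
    have t3 : A.indicator (pp lam) (m+1) * (VV lam (m+2) + UU lam (m+1))
        ≤ pp lam (m+1) * (VV lam (m+2) + UU lam (m+1)) :=
      mul_le_mul_of_nonneg_right hind1 hVU0
    linarith

lemma ind_pp_eq (k : ℕ) :
    A.indicator (pp lam) k = pp lam k * A.indicator (fun _ => (1:ℝ)) k := by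
  by_cases hk : k ∈ A <;> simp [Set.indicator_of_mem, Set.indicator_of_notMem, hk]

lemma stein_eq (hl : 0 < lam) (k : ℕ) :
    lam * ff lam A (k+1) - (k : ℝ) * ff lam A k
      = A.indicator (fun _ => (1:ℝ)) k - PA lam A := by
  have hlam' : lam ≠ 0 := hl.ne'
  have hd1 : lam * cc lam (k+1) = k.factorial * Real.exp lam / lam ^ k := by
    unfold cc
    simp only [show ∀ m : ℕ, m+2-1 = m+1 from fun m => by omega, Nat.add_sub_cancel]
    rw [pow_succ]
    field_simp
  have hd2 : (k : ℝ) * ff lam A k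
      = (k.factorial * Real.exp lam / lam ^ k) * (SA lam A k - PA lam A * FF lam k) := by
    cases k with
    | zero => simp [SA, FF]
    | succ j =>
      unfold ff cc
      simp only [show ∀ m : ℕ, m+2-1 = m+1 from fun m => by omega, Nat.add_sub_cancel]
      have hfac : ((j+1).factorial : ℝ) = ((j:ℝ)+1) * j.factorial := by
        rw [Nat.factorial_succ]; push_cast; ring
      rw [hfac]
      push_cast
      ring
  have hdpp : (k.factorial * Real.exp lam / lam ^ k) * pp lam k = 1 := by
    unfold pp ppow
    rw [Real.exp_neg]
    have h0 : (k.factorial : ℝ) ≠ 0 := by positivity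
    field_simp
  calc lam * ff lam A (k+1) - (k : ℝ) * ff lam A k
      = (lam * cc lam (k+1)) * (SA lam A (k+1) - PA lam A * FF lam (k+1))
        - (k : ℝ) * ff lam A k := by unfold ff; ring
    _ = (k.factorial * Real.exp lam / lam ^ k)
          * (A.indicator (pp lam) k - PA lam A * pp lam k) := by
        rw [hd1, hd2, SA_succ, FF_succ]; ring
    _ = ((k.factorial * Real.exp lam / lam ^ k) * pp lam k)
          * (A.indicator (fun _ => (1:ℝ)) k - PA lam A) := by
        rw [ind_pp_eq]; ring
    _ = A.indicator (fun _ => (1:ℝ)) k - PA lam A := by rw [hdpp]; ring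

end Bounds

section Binomial

open Finset

/-- Shift the `k * g k` sum: size-bias of the binomial. -/
lemma binom_sum_k (N : ℕ) (p : ℝ) (g : ℕ → ℝ) :
    ∑ k ∈ range (N+2), ((N+1).choose k : ℝ) * p^k * (1-p)^(N+1-k) * ((k:ℝ) * g k)
      = ((N:ℝ)+1) * p *
        ∑ m ∈ range (N+1), ((N).choose m : ℝ) * p^m * (1-p)^(N-m) * g (m+1) := by
  rw [Finset.sum_range_succ' _ (N+1)]
  rw [Finset.mul_sum]
  simp only [Nat.cast_zero, pow_zero, zero_mul, mul_zero, add_zero]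
  apply Finset.sum_congr rfl
  intro m hm
  have hchoose : ((N+1).choose (m+1) : ℝ) * ((m:ℝ)+1) = ((N:ℝ)+1) * (N.choose m : ℝ) := by
    have := Nat.add_one_mul_choose_eq N m
    have h2 : ((N.succ * N.choose m : ℕ) : ℝ) = ((N.succ.choose m.succ * m.succ : ℕ) : ℝ) := by
      rw [this]
    push_cast at h2
    linarith
  have hsub : N + 1 - (m+1) = N - m := by omega
  rw [hsub]
  push_cast
  linear_combination (g (m+1) * p ^ m * p * (1-p)^(N-m)) * hchoose

/-- Pascal decomposition of the `g (k+1)` sum. -/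
lemma binom_sum_k1 (N : ℕ) (p : ℝ) (g : ℕ → ℝ) :
    ∑ k ∈ range (N+2), ((N+1).choose k : ℝ) * p^k * (1-p)^(N+1-k) * g (k+1)
      = ∑ m ∈ range (N+1), ((N).choose m : ℝ) * p^m * (1-p)^(N-m)
          * ((1-p) * g (m+1) + p * g (m+2)) := by
  rw [Finset.sum_range_succ' _ (N+1)]
  have hpascal : ∀ m ∈ range (N+1),
      ((N+1).choose (m+1) : ℝ) * p^(m+1) * (1-p)^(N+1-(m+1)) * g ((m+1)+1)
        = (N.choose m : ℝ) * p^(m+1) * (1-p)^(N-m) * g (m+2)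
          + (N.choose (m+1) : ℝ) * p^(m+1) * (1-p)^(N-m) * g (m+2) := by
    intro m hm
    have hsub : N + 1 - (m+1) = N - m := by omega
    have hch : ((N+1).choose (m+1) : ℝ) = (N.choose m : ℝ) + (N.choose (m+1) : ℝ) := by
      have h3 : ((N+1).choose (m+1) : ℕ) = N.choose m + N.choose (m+1) := Nat.choose_succ_succ N m
      exact_mod_cast congrArg (Nat.cast (R := ℝ)) h3
    rw [hsub, hch]
    ring
  rw [Finset.sum_congr rfl hpascal, Finset.sum_add_distrib]
  -- second sum: drop the vanishing last term, it equals the shifted (1-p)-part of the RHS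
  have hB : ∑ m ∈ range (N+1), (N.choose (m+1) : ℝ) * p^(m+1) * (1-p)^(N-m) * g (m+2)
      = ∑ m ∈ range N, (N.choose (m+1) : ℝ) * p^(m+1) * (1-p)^(N-m) * g (m+2) := by
    rw [Finset.sum_range_succ]
    simp [Nat.choose_succ_self]
  have hRHS : ∑ m ∈ range (N+1), ((N).choose m : ℝ) * p^m * (1-p)^(N-m)
        * ((1-p) * g (m+1) + p * g (m+2))
      = ∑ m ∈ range (N+1), ((N).choose m : ℝ) * p^m * (1-p)^(N-m) * (1-p) * g (m+1)
        + ∑ m ∈ range (N+1), ((N).choose m : ℝ) * p^m * (1-p)^(N-m) * p * g (m+2) := by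
    rw [← Finset.sum_add_distrib]
    apply Finset.sum_congr rfl
    intro m _
    ring
  rw [hRHS]
  have hshift : ∑ m ∈ range (N+1), ((N).choose m : ℝ) * p^m * (1-p)^(N-m) * (1-p) * g (m+1)
      = ∑ i ∈ range N, ((N).choose (i+1) : ℝ) * p^(i+1) * (1-p)^(N-(i+1)) * (1-p) * g (i+2)
        + (1-p)^N * (1-p) * g 1 := by
    rw [Finset.sum_range_succ' _ N]
    simp
  have hexp : ∀ i ∈ range N,
      ((N).choose (i+1) : ℝ) * p^(i+1) * (1-p)^(N-(i+1)) * (1-p) * g (i+2)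
        = ((N).choose (i+1) : ℝ) * p^(i+1) * (1-p)^(N-i) * g (i+2) := by
    intro i hi
    rw [Finset.mem_range] at hi
    have : N - i = (N - (i+1)) + 1 := by omega
    rw [this, pow_succ]
    ring
  rw [hshift, Finset.sum_congr rfl hexp, hB]
  have hlast : (((N+1).choose 0 : ℕ) : ℝ) * p^0 * (1-p)^(N+1-0) * g (0+1)
      = (1-p)^N * (1-p) * g 1 := by
    norm_num [pow_succ]
  have hA : ∀ m ∈ range (N+1),
      ((N).choose m : ℝ) * p^m * (1-p)^(N-m) * p * g (m+2)
        = (N.choose m : ℝ) * p^(m+1) * (1-p)^(N-m) * g (m+2) := by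
    intro m _
    rw [pow_succ]
    ring
  rw [Finset.sum_congr rfl hA, hlast]
  ring

end Binomial

section Main

open Finset

/-- Abstract Chen-Stein estimate: binomial(N+1, p) vs Poisson((N+1)p), analytically. -/
lemma main_bound (N : ℕ) (p : ℝ) (hp : 0 < p) (hp1 : p ≤ 1) (A : Set ℕ) :
    |∑ k ∈ range (N+2), ((N+1).choose k : ℝ) * p^k * (1-p)^(N+1-k)
          * A.indicator (fun _ => (1:ℝ)) k
        - PA (((N:ℝ)+1)*p) A| ≤ p := by
  set lam : ℝ := ((N:ℝ)+1)*p with hlam_def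
  have hl : 0 < lam := by positivity
  have hq : 0 ≤ 1 - p := by linarith
  have hsum1 : ∑ k ∈ range (N+2), ((N+1).choose k : ℝ) * p^k * (1-p)^(N+1-k) = 1 := by
    have hap := add_pow p (1-p) (N+1)
    simp only [add_sub_cancel, one_pow] at hap
    rw [Finset.sum_congr rfl (fun k (_ : k ∈ range (N+2)) => show
      ((N+1).choose k : ℝ) * p^k * (1-p)^(N+1-k)
        = p^k * (1-p)^(N+1-k) * ((N+1).choose k : ℝ) from by ring)]
    exact hap.symm
  have hsum1' : ∑ m ∈ range (N+1), ((N).choose m : ℝ) * p^m * (1-p)^(N-m) = 1 := by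
    have hap := add_pow p (1-p) N
    simp only [add_sub_cancel, one_pow] at hap
    rw [Finset.sum_congr rfl (fun k (_ : k ∈ range (N+1)) => show
      ((N).choose k : ℝ) * p^k * (1-p)^(N-k)
        = p^k * (1-p)^(N-k) * ((N).choose k : ℝ) from by ring)]
    exact hap.symm
  have hsplit : ∑ k ∈ range (N+2), ((N+1).choose k : ℝ) * p^k * (1-p)^(N+1-k)
          * A.indicator (fun _ => (1:ℝ)) k - PA lam A
      = ∑ k ∈ range (N+2), ((N+1).choose k : ℝ) * p^k * (1-p)^(N+1-k)
          * (A.indicator (fun _ => (1:ℝ)) k - PA lam A) := by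
    rw [Finset.sum_congr rfl (fun k (_ : k ∈ range (N+2)) => show
      ((N+1).choose k : ℝ) * p^k * (1-p)^(N+1-k)
          * (A.indicator (fun _ => (1:ℝ)) k - PA lam A)
        = ((N+1).choose k : ℝ) * p^k * (1-p)^(N+1-k) * A.indicator (fun _ => (1:ℝ)) k
          - ((N+1).choose k : ℝ) * p^k * (1-p)^(N+1-k) * PA lam A from by ring)]
    rw [Finset.sum_sub_distrib, ← Finset.sum_mul, hsum1, one_mul]
  have hstein : ∑ k ∈ range (N+2), ((N+1).choose k : ℝ) * p^k * (1-p)^(N+1-k)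
          * (A.indicator (fun _ => (1:ℝ)) k - PA lam A)
      = ∑ k ∈ range (N+2), ((N+1).choose k : ℝ) * p^k * (1-p)^(N+1-k)
          * (lam * ff lam A (k+1) - (k:ℝ) * ff lam A k) :=
    Finset.sum_congr rfl fun k _ => by rw [stein_eq hl k]
  have hcomb : ∑ k ∈ range (N+2), ((N+1).choose k : ℝ) * p^k * (1-p)^(N+1-k)
          * (lam * ff lam A (k+1) - (k:ℝ) * ff lam A k)
      = lam * p * ∑ m ∈ range (N+1), ((N).choose m : ℝ) * p^m * (1-p)^(N-m)
          * (ff lam A (m+2) - ff lam A (m+1)) := by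
    have h1 := binom_sum_k N p (ff lam A)
    have h2 := binom_sum_k1 N p (ff lam A)
    calc ∑ k ∈ range (N+2), ((N+1).choose k : ℝ) * p^k * (1-p)^(N+1-k)
          * (lam * ff lam A (k+1) - (k:ℝ) * ff lam A k)
        = lam * ∑ k ∈ range (N+2), ((N+1).choose k : ℝ) * p^k * (1-p)^(N+1-k)
              * ff lam A (k+1)
          - ∑ k ∈ range (N+2), ((N+1).choose k : ℝ) * p^k * (1-p)^(N+1-k)
              * ((k:ℝ) * ff lam A k) := by
          rw [Finset.mul_sum, ← Finset.sum_sub_distrib]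
          exact Finset.sum_congr rfl fun k _ => by ring
      _ = lam * ∑ m ∈ range (N+1), ((N).choose m : ℝ) * p^m * (1-p)^(N-m)
              * ((1-p) * ff lam A (m+1) + p * ff lam A (m+2))
          - ((N:ℝ)+1) * p * ∑ m ∈ range (N+1), ((N).choose m : ℝ) * p^m * (1-p)^(N-m)
              * ff lam A (m+1) := by rw [h1, h2]
      _ = lam * ∑ m ∈ range (N+1), (((N).choose m : ℝ) * p^m * (1-p)^(N-m)
              * ((1-p) * ff lam A (m+1) + p * ff lam A (m+2))
            - ((N).choose m : ℝ) * p^m * (1-p)^(N-m) * ff lam A (m+1)) := by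
          rw [Finset.sum_sub_distrib, mul_sub, hlam_def]
      _ = lam * ∑ m ∈ range (N+1), p * (((N).choose m : ℝ) * p^m * (1-p)^(N-m)
              * (ff lam A (m+2) - ff lam A (m+1))) := by
          rw [Finset.sum_congr rfl (fun m (_ : m ∈ range (N+1)) => show
            ((N).choose m : ℝ) * p^m * (1-p)^(N-m)
              * ((1-p) * ff lam A (m+1) + p * ff lam A (m+2))
            - ((N).choose m : ℝ) * p^m * (1-p)^(N-m) * ff lam A (m+1)
            = p * (((N).choose m : ℝ) * p^m * (1-p)^(N-m)
              * (ff lam A (m+2) - ff lam A (m+1))) from by ring)]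
      _ = lam * p * ∑ m ∈ range (N+1), ((N).choose m : ℝ) * p^m * (1-p)^(N-m)
            * (ff lam A (m+2) - ff lam A (m+1)) := by
          rw [← Finset.mul_sum]
          ring
  rw [hsplit, hstein, hcomb]
  have habs : |∑ m ∈ range (N+1), ((N).choose m : ℝ) * p^m * (1-p)^(N-m)
        * (ff lam A (m+2) - ff lam A (m+1))| ≤ 1 / lam := by
    refine (Finset.abs_sum_le_sum_abs _ _).trans ?_
    have hbd : ∀ m ∈ range (N+1), |((N).choose m : ℝ) * p^m * (1-p)^(N-m)
        * (ff lam A (m+2) - ff lam A (m+1))|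
        ≤ ((N).choose m : ℝ) * p^m * (1-p)^(N-m) * (1/lam) := by
      intro m _
      rw [abs_mul]
      have hb0 : (0:ℝ) ≤ ((N).choose m : ℝ) * p^m * (1-p)^(N-m) := by positivity
      rw [abs_of_nonneg hb0]
      exact mul_le_mul_of_nonneg_left (abs_delta hl m) hb0
    refine (Finset.sum_le_sum hbd).trans ?_
    rw [← Finset.sum_mul, hsum1', one_mul]
  rw [abs_mul, abs_of_nonneg (by positivity : (0:ℝ) ≤ lam * p)]
  calc lam * p * |∑ m ∈ range (N+1), ((N).choose m : ℝ) * p^m * (1-p)^(N-m)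
        * (ff lam A (m+2) - ff lam A (m+1))|
      ≤ lam * p * (1/lam) := mul_le_mul_of_nonneg_left habs (by positivity)
    _ = p := by field_simp

end Main

section Measures

open Finset

lemma poisson_measure_eq {lam : ℝ} (hl : 0 < lam) (A : Set ℕ) :
    (poissonMeasure lam.toNNReal A).toReal = PA lam A := by
  rw [poissonMeasure, Measure.sum_apply _ MeasurableSet.of_discrete]
  have hcoe : ((lam.toNNReal : ℝ≥0) : ℝ) = lam := Real.coe_toNNReal _ hl.le
  rw [tsum_congr (g := fun k => ENNReal.ofReal (A.indicator (pp lam) k)) (fun k => by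
    rw [Measure.smul_apply, Measure.dirac_apply' _ MeasurableSet.of_discrete, smul_eq_mul, hcoe]
    by_cases hk : k ∈ A
    · rw [Set.indicator_of_mem hk, Set.indicator_of_mem hk, Pi.one_apply, mul_one, pp, ppow,
        mul_div_assoc]
    · rw [Set.indicator_of_notMem hk, Set.indicator_of_notMem hk, mul_zero, ENNReal.ofReal_zero])]
  rw [ENNReal.tsum_toReal_eq (fun _ => ENNReal.ofReal_ne_top)]
  unfold PA
  exact tsum_congr fun k =>
    ENNReal.toReal_ofReal (Set.indicator_nonneg (fun i _ => pp_nonneg hl.le i) _)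

lemma binomial_measure_eq (n : ℕ) (p : ℝ) (hp0 : 0 ≤ p) (hp1 : p ≤ 1)
    (h : ENNReal.ofReal p ≤ 1) (A : Set ℕ) :
    (((PMF.binomial p.toNNReal (ENNReal.coe_le_one_iff.mp h) n).toMeasure.map (Fin.val)) A).toReal
      = ∑ k ∈ range (n+1), (n.choose k : ℝ) * p^k * (1-p)^(n-k)
          * A.indicator (fun _ => (1:ℝ)) k := by
  rw [Measure.map_apply (measurable_of_countable _) MeasurableSet.of_discrete]
  rw [PMF.toMeasure_apply _ MeasurableSet.of_discrete]
  rw [tsum_fintype]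
  rw [ENNReal.toReal_sum (fun i _ => by
    by_cases hk : i ∈ Fin.val ⁻¹' A
    · rw [Set.indicator_of_mem hk, PMF.binomial_apply]
      exact ENNReal.mul_ne_top (ENNReal.mul_ne_top
        (ENNReal.pow_ne_top ENNReal.ofReal_ne_top)
        (ENNReal.pow_ne_top (by
          exact ENNReal.sub_ne_top ENNReal.one_ne_top))) (ENNReal.natCast_ne_top _)
    · rw [Set.indicator_of_notMem hk]
      exact ENNReal.zero_ne_top)]
  rw [show (fun i : Fin (n+1) => ((Fin.val ⁻¹' A).indicator
        (⇑(PMF.binomial p.toNNReal (ENNReal.coe_le_one_iff.mp h) n)) i).toReal)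
      = fun i : Fin (n+1) => (n.choose (i:ℕ) : ℝ) * p^(i:ℕ) * (1-p)^(n-(i:ℕ))
          * A.indicator (fun _ => (1:ℝ)) (i:ℕ) from ?_]
  · exact Fin.sum_univ_eq_sum_range
      (fun k => (n.choose k : ℝ) * p^k * (1-p)^(n-k) * A.indicator (fun _ => (1:ℝ)) k) (n+1)
  · funext i
    have hsub : (1 : ℝ≥0∞) - ENNReal.ofReal p = ENNReal.ofReal (1-p) := by
      rw [ENNReal.ofReal_sub 1 hp0, ENNReal.ofReal_one]
    have hlastsub : ((Fin.last n : ℕ) : ℕ) = n := Fin.val_last n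
    by_cases hk : (i:ℕ) ∈ A
    · rw [Set.indicator_of_mem (show i ∈ Fin.val ⁻¹' A from hk), Set.indicator_of_mem hk]
      have hc : ((p.toNNReal : ℝ≥0∞)) = ENNReal.ofReal p := rfl
      rw [PMF.binomial_apply, hc, hsub, Fin.val_last]
      rw [ENNReal.toReal_mul, ENNReal.toReal_mul, ENNReal.toReal_pow, ENNReal.toReal_pow,
        ENNReal.toReal_ofReal hp0, ENNReal.toReal_ofReal (by linarith), ENNReal.toReal_natCast]
      ring
    · rw [Set.indicator_of_notMem (show i ∉ Fin.val ⁻¹' A from hk),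
        Set.indicator_of_notMem hk]
      simp

end Measures

end SteinChen

open SteinChen in
/-- Binomial vs Poisson: if `N ∼ Binomial(n, p)` with `np > 0`, then the total variation
distance between the law of `N` and `Poisson(np)` is at most `(1/(np)) · n p² = p`:
for every `A ⊆ ℕ`, `|P(N ∈ A) - Poisson(np)(A)| ≤ p`. -/
theorem stmt7 (n : ℕ) (p : ℝ) (hp0 : 0 ≤ p) (hp1 : p ≤ 1)
    (h : ENNReal.ofReal p ≤ 1) (hpos : 0 < n * p) :
    ∀ A : Set ℕ,
      |(((PMF.binomial p.toNNReal (ENNReal.coe_le_one_iff.mp h) n).toMeasure.map (Fin.val)) A).toReal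
          - (poissonMeasure ((n : ℝ) * p).toNNReal A).toReal|
        ≤ p := by
  intro A
  have hp : 0 < p := by
    rcases lt_or_ge 0 p with h' | h'
    · exact h'
    · exfalso
      have : (n:ℝ) * p ≤ 0 := mul_nonpos_of_nonneg_of_nonpos (Nat.cast_nonneg n) h'
      linarith
  have hn : n ≠ 0 := by
    rintro rfl
    simp at hpos
  obtain ⟨N, rfl⟩ := Nat.exists_eq_succ_of_ne_zero hn
  have hlam : ((N+1 : ℕ) : ℝ) * p = ((N:ℝ)+1) * p := by push_cast; ring
  have hl : 0 < ((N:ℝ)+1) * p := by positivity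
  rw [binomial_measure_eq (N+1) p hp0 hp1 h A, hlam, poisson_measure_eq hl A]
  exact main_bound N p hp hp1 A
end
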